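/- As n → ∞, the ratio of the total number of 1s to the total number of 0s over all binary words of length n avoiding the factor 11 tends to 2 − φ, where φ = (1+√5)/2; consequently the frequency of 1s in these words tends to (2−φ)/(3−φ). -/

import Mathlib

/-- `w` avoids the factor `1^k`, i.e. has no `k` consecutive `1`s. -/
def Avoids (k : ℕ) (w : List Bool) : Prop := ¬ (List.replicate k true <:+: w)

/-- The popularity of the bit `b` among words of length `n` avoiding `11`. -/
noncomputable def fibPop (b : Bool) (n : ℕ) : ℕ :=
  Nat.card {p : List Bool × ℕ //
    p.1.length = n ∧ Avoids 2 p.1 ∧ p.1[p.2]? = some b}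

/-- The number of words of length `n` avoiding `11`. -/
noncomputable def fibCount (n : ℕ) : ℕ :=
  Nat.card {w : List Bool // w.length = n ∧ Avoids 2 w}

namespace FibWordsAux

open List Finset Filter Real

/-! ### Combinatorics: the list of words avoiding `11` -/

lemma avoids_small (w : List Bool) (h : w.length ≤ 1) : Avoids 2 w := fun hh => by
  have := hh.length_le; simp at this; omega

lemma avoids_false_cons (w : List Bool) : Avoids 2 (false :: w) ↔ Avoids 2 w := by
  unfold Avoids
  have h2 : List.replicate 2 true = [true, true] := rfl
  rw [h2, List.infix_cons_iff]
  simp [List.cons_prefix_cons, h2]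

lemma not_avoids_tt (w : List Bool) : ¬ Avoids 2 (true :: true :: w) :=
  fun h => h ⟨[], w, rfl⟩

lemma avoids_tf (w : List Bool) : Avoids 2 (true :: false :: w) ↔ Avoids 2 w := by
  unfold Avoids
  have h2 : List.replicate 2 true = [true, true] := rfl
  rw [h2, List.infix_cons_iff, List.infix_cons_iff]
  simp [List.cons_prefix_cons, h2]

def LW : ℕ → List (List Bool)
  | 0 => [[]]
  | 1 => [[false], [true]]
  | (n+2) => (LW (n+1)).map (false :: ·) ++ (LW n).map (fun w => true :: false :: w)

lemma mem_LW : ∀ (n : ℕ) (w : List Bool), w ∈ LW n ↔ (w.length = n ∧ Avoids 2 w)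
  | 0, w => by
    simp only [LW, List.mem_singleton]
    constructor
    · rintro rfl; exact ⟨rfl, avoids_small _ (by simp)⟩
    · rintro ⟨h, -⟩; exact List.eq_nil_of_length_eq_zero h
  | 1, w => by
    simp only [LW]
    constructor
    · intro h
      have : w = [false] ∨ w = [true] := by simpa using h
      rcases this with rfl | rfl <;> exact ⟨rfl, avoids_small _ (by simp)⟩
    · rintro ⟨h, -⟩
      match w, h with
      | [b], _ => cases b <;> simp
  | (n+2), w => by
    simp only [LW, List.mem_append, List.mem_map]
    constructor
    · rintro (⟨v, hv, rfl⟩ | ⟨v, hv, rfl⟩)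
      · obtain ⟨hl, ha⟩ := (mem_LW (n+1) v).1 hv
        exact ⟨by simp [hl], (avoids_false_cons v).2 ha⟩
      · obtain ⟨hl, ha⟩ := (mem_LW n v).1 hv
        exact ⟨by simp [hl], (avoids_tf v).2 ha⟩
    · rintro ⟨hl, ha⟩
      match w with
      | false :: v =>
        left
        exact ⟨v, (mem_LW (n+1) v).2 ⟨by simpa using hl, (avoids_false_cons v).1 ha⟩, rfl⟩
      | true :: true :: v => exact absurd ha (not_avoids_tt v)
      | true :: false :: v =>
        right
        exact ⟨v, (mem_LW n v).2 ⟨by simpa using hl, (avoids_tf v).1 ha⟩, rfl⟩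
      | [true] => simp at hl

lemma length_LW : ∀ n, (LW n).length = Nat.fib (n + 2)
  | 0 => rfl
  | 1 => rfl
  | (n+2) => by
    simp [LW, length_LW (n+1), length_LW n, Nat.fib_add_two]; omega

lemma nodup_LW : ∀ n, (LW n).Nodup
  | 0 => by simp [LW]
  | 1 => by simp [LW]
  | (n+2) => by
    refine List.Nodup.append ((nodup_LW (n+1)).map ?_) ((nodup_LW n).map ?_) ?_
    · intro a b h; simpa using h
    · intro a b h; simpa using h
    · intro x hx hy
      simp only [List.mem_map] at hx hy
      obtain ⟨a, -, rfl⟩ := hx; obtain ⟨b, -, h⟩ := hy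
      simp at h

/-! ### Cardinality identifications -/

lemma fibCount_eq (n : ℕ) : fibCount n = Nat.fib (n + 2) := by
  classical
  have e : fibCount n = Nat.card {w : List Bool // w ∈ (LW n).toFinset} := by
    apply Nat.card_congr
    apply Equiv.subtypeEquivRight
    intro w
    rw [List.mem_toFinset, mem_LW]
  rw [e, Nat.card_eq_finsetCard, List.toFinset_card_of_nodup (nodup_LW n), length_LW]

lemma count_eq_card (w : List Bool) (b : Bool) :
    w.count b = ((Finset.range w.length).filter (fun i => w[i]? = some b)).card := by
  induction w with
  | nil => simp
  | cons a w ih =>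
    rw [Finset.card_filter, List.length_cons, Finset.sum_range_succ']
    simp only [List.getElem?_cons_succ, List.getElem?_cons_zero, ← Finset.card_filter, ← ih]
    rw [List.count_cons]
    have : (if (some a = some b) then 1 else 0) = if a = b then 1 else 0 := by
      by_cases h : a = b <;> simp [h]
    rw [this]
    by_cases h : a = b <;> simp [h, Nat.add_comm]

lemma fibPop_eq (b : Bool) (n : ℕ) :
    fibPop b n = ((LW n).map (fun w => w.count b)).sum := by
  classical
  set F : Finset (List Bool × ℕ) :=
    (LW n).toFinset.biUnion
      (fun w => ({w} : Finset (List Bool)) ×ˢ ((Finset.range n).filter (fun i => w[i]? = some b)))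
    with hF
  have hmem : ∀ p : List Bool × ℕ,
      p ∈ F ↔ (p.1.length = n ∧ Avoids 2 p.1 ∧ p.1[p.2]? = some b) := by
    rintro ⟨w, i⟩
    simp only [hF, Finset.mem_biUnion, Finset.mem_product, Finset.mem_singleton,
      Finset.mem_filter, Finset.mem_range, List.mem_toFinset, mem_LW]
    constructor
    · rintro ⟨v, ⟨hl, ha⟩, rfl, hi, hg⟩
      exact ⟨hl, ha, hg⟩
    · rintro ⟨hl, ha, hg⟩
      have hi : i < n := by
        obtain ⟨h, -⟩ := List.getElem?_eq_some_iff.1 hg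
        omega
      exact ⟨w, ⟨hl, ha⟩, rfl, hi, hg⟩
  have e1 : fibPop b n = F.card := by
    rw [fibPop, ← Nat.card_eq_finsetCard]
    exact Nat.card_congr (Equiv.subtypeEquivRight (fun p => (hmem p).symm))
  rw [e1, Finset.card_biUnion]
  · rw [← List.sum_toFinset _ (nodup_LW n)]
    apply Finset.sum_congr rfl
    intro w hw
    rw [List.mem_toFinset, mem_LW] at hw
    rw [Finset.card_product, Finset.card_singleton, one_mul, ← hw.1, ← count_eq_card]
  · intro x hx y hy hxy
    simp only [Finset.disjoint_left]
    rintro ⟨w, i⟩ h1 h2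
    simp only [Finset.mem_product, Finset.mem_singleton] at h1 h2
    exact hxy (h1.1 ▸ h2.1 ▸ rfl)

/-! ### Recurrence and closed form for the number of ones -/

def tOnes (n : ℕ) : ℕ := ((LW n).map (fun w => w.count true)).sum

lemma sum_map_add_one (l : List (List Bool)) (g : List Bool → ℕ) :
    (l.map (fun v => g v + 1)).sum = (l.map g).sum + l.length := by
  induction l with
  | nil => simp
  | cons a l ih => simp [ih]; omega

lemma tOnes_rec (n : ℕ) :
    tOnes (n+2) = tOnes (n+1) + tOnes n + Nat.fib (n+2) := by
  unfold tOnes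
  rw [show LW (n+2) = (LW (n+1)).map (false :: ·) ++ (LW n).map (fun w => true :: false :: w)
      from rfl,
    List.map_append, List.sum_append, List.map_map, List.map_map]
  have h1 : ((fun w => List.count true w) ∘ (false :: ·)) = fun w => List.count true w := by
    funext w; simp [List.count_cons]
  have h2 : ((fun w => List.count true w) ∘ (fun w => true :: false :: w)) =
      fun w => List.count true w + 1 := by
    funext w; simp [List.count_cons]
  rw [h1, h2, sum_map_add_one, length_LW]
  ring

lemma tOnes_closed : ∀ n, 5 * tOnes n + Nat.fib (n+1) = (n+1) * (Nat.fib (n+2) + Nat.fib n)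
  | 0 => by simp [tOnes, LW]
  | 1 => by simp [tOnes, LW]; rfl
  | (n+2) => by
    have h1 := tOnes_closed n
    have h2 := tOnes_closed (n+1)
    have hr := tOnes_rec n
    have f2 : Nat.fib (n+2) = Nat.fib n + Nat.fib (n+1) := Nat.fib_add_two
    have f3 : Nat.fib (n+3) = Nat.fib (n+1) + Nat.fib (n+2) := Nat.fib_add_two
    have f4 : Nat.fib (n+4) = Nat.fib (n+2) + Nat.fib (n+3) := Nat.fib_add_two
    simp only [show n+1+1 = n+2 from rfl, show n+1+2 = n+3 from rfl, show n+2+1 = n+3 from rfl,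
      show n+2+2 = n+4 from rfl] at *
    zify at h1 h2 hr f2 f3 f4 ⊢
    linear_combination h1 + h2 + 5 * hr - ((n:ℤ)+1) * f2 - ((n:ℤ)+3) * f4

lemma count_true_add_count_false (w : List Bool) :
    w.count true + w.count false = w.length := by
  induction w with
  | nil => simp
  | cons a w ih => cases a <;> simp [List.count_cons] <;> omega

lemma pop_add (n : ℕ) : fibPop true n + fibPop false n = n * fibCount n := by
  rw [fibPop_eq, fibPop_eq, fibCount_eq, ← length_LW]
  have : ∀ l : List (List Bool), (∀ w ∈ l, w.length = n) →
      ((l.map (fun w => w.count true)).sum + (l.map (fun w => w.count false)).sum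
        = n * l.length) := by
    intro l
    induction l with
    | nil => simp
    | cons a l ih =>
      intro h
      have ha := h a (by simp)
      have := count_true_add_count_false a
      simp only [List.map_cons, List.sum_cons, List.length_cons]
      rw [Nat.mul_succ]
      have hrest := ih (fun w hw => h w (by simp [hw]))
      omega
  exact this (LW n) (fun w hw => ((mem_LW n w).1 hw).1)

/-! ### Analysis -/

section Abstract
variable (p q s : ℝ) (hp : 1 < p) (hq : -1 < q) (hq0 : q < 0) (hs : 0 < s)
  (hfib : ∀ n : ℕ, (Nat.fib n : ℝ) = (p^n - q^n)/s)

include hp hq hq0 hs hfib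

lemma tendsto_fib_norm : Tendsto (fun n : ℕ => (Nat.fib n : ℝ) * (1/p)^n) atTop (nhds (1/s)) := by
  have hp0 : (0:ℝ) < p := by linarith
  have heq : ∀ n : ℕ, (Nat.fib n : ℝ) * (1/p)^n = (1 - (q/p)^n)/s := by
    intro n
    rw [hfib n, div_pow q p, div_pow 1 p, one_pow]
    have hpn : p^n ≠ 0 := by positivity
    have hs' : s ≠ 0 := ne_of_gt hs
    rw [div_mul_eq_mul_div, div_eq_div_iff hs' hs']
    field_simp
  simp only [heq]
  have habs : |q/p| < 1 := by
    rw [abs_div, abs_of_pos hp0, abs_of_neg hq0, div_lt_one hp0]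
    linarith
  have hpow := tendsto_pow_atTop_nhds_zero_of_abs_lt_one habs
  have := ((tendsto_const_nhds (x := (1:ℝ))).sub hpow).div_const s
  simpa using this

lemma tendsto_fib_ratio :
    Tendsto (fun n : ℕ => (Nat.fib n : ℝ) / (Nat.fib (n+2) : ℝ)) atTop (nhds (1/p^2)) := by
  have hp0 : (0:ℝ) < p := by linarith
  have hne : (1:ℝ)/s ≠ 0 := by positivity
  have hnorm := tendsto_fib_norm p q s hp hq hq0 hs hfib
  have hshift : Tendsto (fun n : ℕ => (Nat.fib (n+2) : ℝ) * (1/p)^(n+2)) atTop (nhds (1/s)) :=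
    hnorm.comp (tendsto_add_atTop_nat 2)
  have hdiv := (hnorm.div hshift hne).div_const (p^2)
  rw [div_self hne] at hdiv
  apply hdiv.congr
  intro n
  have hf2 : (0:ℝ) < (Nat.fib (n+2) : ℝ) := by
    exact_mod_cast Nat.fib_pos.2 (by omega)
  have hpn : ((1:ℝ)/p)^n ≠ 0 := by positivity
  show ((Nat.fib n : ℝ) * (1/p)^n) / ((Nat.fib (n+2) : ℝ) * (1/p)^(n+2)) / p^2
      = (Nat.fib n : ℝ) / (Nat.fib (n+2) : ℝ)
  have h1p : (1:ℝ)/p ≠ 0 := by positivity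
  rw [pow_succ, pow_succ]
  field_simp

end Abstract

lemma tendsto_small : Tendsto (fun n : ℕ => (Nat.fib (n+1) : ℝ) / ((n:ℝ) * (Nat.fib (n+2):ℝ)))
    atTop (nhds 0) := by
  apply squeeze_zero (fun n => by positivity) (g := fun n : ℕ => 1/(n:ℝ))
  · intro n
    rcases Nat.eq_zero_or_pos n with rfl | hn
    · simp
    · have hf2 : (0:ℝ) < (Nat.fib (n+2) : ℝ) := by exact_mod_cast Nat.fib_pos.2 (by omega)
      have hn' : (0:ℝ) < (n:ℝ) := by exact_mod_cast hn
      rw [div_le_div_iff₀ (by positivity) hn']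
      have hle : (Nat.fib (n+1) : ℝ) ≤ (Nat.fib (n+2) : ℝ) := by
        exact_mod_cast Nat.fib_le_fib_succ
      nlinarith
  · exact tendsto_one_div_atTop_nhds_zero_nat

lemma tendsto_main (p q s : ℝ) (hp : 1 < p) (hq : -1 < q) (hq0 : q < 0) (hs : 0 < s)
    (hfib : ∀ n : ℕ, (Nat.fib n : ℝ) = (p^n - q^n)/s) :
    Tendsto (fun n : ℕ => (tOnes n : ℝ) / ((n:ℝ) * (Nat.fib (n+2) : ℝ)))
      atTop (nhds ((1 * (1 + 1/p^2) - 0)/5)) := by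
  have hratio := tendsto_fib_ratio p q s hp hq hq0 hs hfib
  have hone : Tendsto (fun n : ℕ => (1:ℝ) + 1/(n:ℝ)) atTop (nhds 1) := by
    have := tendsto_one_div_atTop_nhds_zero_nat.const_add (1:ℝ)
    simpa using this
  have hbig : Tendsto (fun n : ℕ =>
      ((1 + 1/(n:ℝ)) * (1 + (Nat.fib n : ℝ)/(Nat.fib (n+2):ℝ)) -
        (Nat.fib (n+1) : ℝ) / ((n:ℝ) * (Nat.fib (n+2):ℝ)))/5) atTop
      (nhds ((1 * (1 + 1/p^2) - 0)/5)) :=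
    ((hone.mul (hratio.const_add 1)).sub tendsto_small).div_const 5
  apply hbig.congr'
  filter_upwards [eventually_ge_atTop 1] with n hn
  have hf2 : (0:ℝ) < (Nat.fib (n+2) : ℝ) := by exact_mod_cast Nat.fib_pos.2 (by omega)
  have hn' : (0:ℝ) < (n:ℝ) := by exact_mod_cast hn
  have hc' : 5 * (tOnes n : ℝ) + (Nat.fib (n+1) : ℝ)
      = ((n:ℝ)+1) * ((Nat.fib (n+2) : ℝ) + (Nat.fib n : ℝ)) := by exact_mod_cast tOnes_closed n
  have key : (tOnes n : ℝ)
      = (((n:ℝ)+1) * ((Nat.fib (n+2) : ℝ) + (Nat.fib n : ℝ)) - (Nat.fib (n+1) : ℝ))/5 := by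
    linarith
  rw [key]
  field_simp

end FibWordsAux

theorem fibonacci_words_ones_frequency :
    Filter.Tendsto (fun n : ℕ => (fibPop true n : ℝ) / (fibPop false n : ℝ))
      Filter.atTop (nhds (2 - (1 + Real.sqrt 5) / 2)) ∧
    Filter.Tendsto (fun n : ℕ => (fibPop true n : ℝ) / ((n : ℝ) * (fibCount n : ℝ)))
      Filter.atTop
      (nhds ((2 - (1 + Real.sqrt 5) / 2) / (3 - (1 + Real.sqrt 5) / 2))) := by
  open FibWordsAux Filter Real in
  -- numeric facts about √5
  have h5sq : Real.sqrt 5 ^ 2 = 5 := Real.sq_sqrt (by norm_num)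
  have h5nn : (0:ℝ) ≤ Real.sqrt 5 := Real.sqrt_nonneg 5
  have h5gt2 : (2:ℝ) < Real.sqrt 5 := by nlinarith
  have h5lt3 : Real.sqrt 5 < 3 := by nlinarith
  set p : ℝ := (1 + Real.sqrt 5) / 2 with hpdef
  have hp : 1 < p := by rw [hpdef]; linarith
  have hp2 : p < 2 := by rw [hpdef]; linarith
  have hq : (-1:ℝ) < (1 - Real.sqrt 5)/2 := by linarith
  have hq0 : ((1:ℝ) - Real.sqrt 5)/2 < 0 := by linarith
  have hs : (0:ℝ) < Real.sqrt 5 := by linarith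
  have hfib : ∀ n : ℕ, (Nat.fib n : ℝ) = (p^n - ((1 - Real.sqrt 5)/2)^n)/Real.sqrt 5 :=
    Real.coe_fib_eq
  -- main limit
  have hmain := tendsto_main p ((1 - Real.sqrt 5)/2) (Real.sqrt 5) hp hq hq0 hs hfib
  have hp0 : (0:ℝ) < p := by linarith
  have hpsq : p^2 = p + 1 := by rw [hpdef]; field_simp; nlinarith
  have hLval : (1 * (1 + 1/p^2) - 0)/5 = (3 - p)/5 := by
    have h2p : p^2 ≠ 0 := by positivity
    field_simp
    nlinarith
  rw [hLval] at hmain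
  -- identify fibPop true with tOnes and fibCount with fib
  have htrue : ∀ n, fibPop true n = tOnes n := fun n => fibPop_eq true n
  have hcount : ∀ n, fibCount n = Nat.fib (n+2) := fibCount_eq
  have hmain' : Tendsto (fun n : ℕ => (fibPop true n : ℝ) / ((n:ℝ) * (fibCount n : ℝ)))
      atTop (nhds ((3 - p)/5)) := by
    apply hmain.congr
    intro n
    rw [htrue n, hcount n]
  constructor
  · -- first limit: ones/zeros
    have hfalse : ∀ n, (fibPop false n : ℝ) = (n:ℝ) * (fibCount n : ℝ) - (fibPop true n : ℝ) := by
      intro n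
      have := pop_add n
      have : (fibPop true n : ℝ) + (fibPop false n : ℝ) = (n:ℝ) * (fibCount n : ℝ) := by
        exact_mod_cast this
      linarith
    have hLne : (1:ℝ) - (3 - p)/5 ≠ 0 := by
      intro h
      have : p = -2 := by linarith
      linarith
    have hdiv := hmain'.div ((tendsto_const_nhds (x := (1:ℝ))).sub hmain') hLne
    have hval : ((3 - p)/5) / (1 - (3 - p)/5) = 2 - p := by
      have h2p : (2:ℝ) + p ≠ 0 := by linarith
      rw [show (1:ℝ) - (3 - p)/5 = (2 + p)/5 by ring]
      rw [div_div_div_cancel_right₀]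
      · rw [div_eq_iff h2p]; nlinarith
      · norm_num
    rw [hval] at hdiv
    apply hdiv.congr'
    filter_upwards [eventually_ge_atTop 1] with n hn
    have hC : (0:ℝ) < (n:ℝ) * (fibCount n : ℝ) := by
      have : 0 < Nat.fib (n+2) := Nat.fib_pos.2 (by omega)
      have h1 : (0:ℝ) < (fibCount n : ℝ) := by rw [hcount n]; exact_mod_cast this
      have h2 : (0:ℝ) < (n:ℝ) := by exact_mod_cast hn
      positivity
    set T := (fibPop true n : ℝ)
    set C := (n:ℝ) * (fibCount n : ℝ)
    show (T/C) / (1 - T/C) = T / (fibPop false n : ℝ)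
    rw [hfalse n]
    have h1 : 1 - T/C = (C - T)/C := by field_simp
    rw [h1]
    rcases eq_or_ne (C - T) 0 with h | h
    · rw [h]; simp
    · field_simp
      exact (mul_div_cancel_right₀ T h).symm
  · -- second limit
    have hval2 : (3 - p)/5 = (2 - p)/(3 - p) := by
      have h3p : (3:ℝ) - p ≠ 0 := by intro h; nlinarith
      rw [div_eq_div_iff (by norm_num) h3p]
      nlinarith
    rw [hval2] at hmain'
    exact hmain'
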